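/- The set {E_{i,j} : 1 ≤ i < j ≤ n} of elementary matrices is the unique minimal generating set for the monoid U(n,ℕ) of upper-triangular unipotent matrices with natural number entries. -/

import Mathlib

open Matrix Set

/-- The monoid `U(n,ℕ)` of upper triangular unipotent matrices with natural number
entries. -/
def UNNat (n : ℕ) : Set (Matrix (Fin n) (Fin n) ℕ) :=
  {A | (∀ i : Fin n, A i i = 1) ∧ ∀ i j : Fin n, j < i → A i j = 0}

/-- The elementary matrix `E_{i,j}`: the identity with an extra `1` in position `(i,j)`. -/
def Elem (n : ℕ) (i j : Fin n) : Matrix (Fin n) (Fin n) ℕ :=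
  1 + Matrix.single i j 1

namespace ElemAux

variable {n : ℕ}

lemma elem_apply (i j k l : Fin n) :
    Elem n i j k l = (if k = l then 1 else 0) + (if k = i ∧ l = j then 1 else 0) := by
  simp only [_root_.Elem, Matrix.add_apply, Matrix.one_apply, Matrix.single, Matrix.of_apply]
  congr 1
  by_cases h : k = i ∧ l = j
  · simp [h.1, h.2]
  · rw [if_neg h, if_neg]
    rintro ⟨h1, h2⟩
    exact h ⟨h1.symm, h2.symm⟩

lemma one_mem' : (1 : Matrix (Fin n) (Fin n) ℕ) ∈ UNNat n := by
  refine ⟨fun i => by simp, fun i j h => ?_⟩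
  simp [Matrix.one_apply, (h.ne).symm]

lemma mul_mem' {A B : Matrix (Fin n) (Fin n) ℕ} (hA : A ∈ UNNat n) (hB : B ∈ UNNat n) :
    A * B ∈ UNNat n := by
  obtain ⟨hA1, hA0⟩ := hA
  obtain ⟨hB1, hB0⟩ := hB
  constructor
  · intro i
    rw [Matrix.mul_apply, Finset.sum_eq_single i]
    · rw [hA1, hB1]
    · intro m _ hm
      rcases hm.lt_or_gt with h | h
      · rw [hA0 i m h, zero_mul]
      · rw [hB0 m i h, mul_zero]
    · intro h; exact absurd (Finset.mem_univ i) h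
  · intro i j hj
    rw [Matrix.mul_apply]
    apply Finset.sum_eq_zero
    intro m _
    rcases lt_or_ge m i with h | h
    · rw [hA0 i m h, zero_mul]
    · rw [hB0 m j (lt_of_lt_of_le hj h), mul_zero]

lemma elem_mem {i j : Fin n} (hij : i < j) : Elem n i j ∈ UNNat n := by
  constructor
  · intro k
    rw [elem_apply, if_pos rfl, if_neg]
    rintro ⟨h1, h2⟩
    exact hij.ne (h1.symm.trans h2)
  · intro k l hlk
    rw [elem_apply, if_neg hlk.ne', if_neg]
    rintro ⟨h1, h2⟩
    rw [h1, h2] at hlk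
    exact absurd hij (not_lt_of_gt hlk)

/-- `UNNat n` as a submonoid. -/
def UNM (n : ℕ) : Submonoid (Matrix (Fin n) (Fin n) ℕ) where
  carrier := UNNat n
  one_mem' := one_mem'
  mul_mem' := mul_mem'

lemma eq_of_upper {A B : Matrix (Fin n) (Fin n) ℕ} (hA : A ∈ UNNat n) (hB : B ∈ UNNat n)
    (h : ∀ k l : Fin n, k < l → A k l = B k l) : A = B := by
  ext k l
  rcases lt_trichotomy k l with h' | h' | h'
  · exact h k l h'
  · subst h'; rw [hA.1, hB.1]
  · rw [hA.2 k l h', hB.2 k l h']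

lemma std_mul (i j : Fin n) (A : Matrix (Fin n) (Fin n) ℕ) (k l : Fin n) :
    (Matrix.single i j (1 : ℕ) * A) k l = if k = i then A j l else 0 := by
  rw [Matrix.mul_apply]
  by_cases hk : k = i
  · subst hk
    rw [if_pos rfl, Finset.sum_eq_single j]
    · simp [Matrix.single]
    · intro m _ hm
      simp [Matrix.single, Ne.symm hm]
    · intro h; exact absurd (Finset.mem_univ j) h
  · rw [if_neg hk]
    apply Finset.sum_eq_zero
    intro m _
    rw [show Matrix.single i j (1 : ℕ) k m = 0 by
      simp only [Matrix.single, Matrix.of_apply]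
      exact if_neg (fun h : i = k ∧ j = m => hk h.1.symm), zero_mul]

lemma elem_mul_apply (i j : Fin n) (A : Matrix (Fin n) (Fin n) ℕ) (k l : Fin n) :
    (Elem n i j * A) k l = A k l + if k = i then A j l else 0 := by
  rw [_root_.Elem, add_mul, one_mul, Matrix.add_apply, std_mul]

/-- Every element of `UNNat n` is in the closure of the elementary matrices. -/
lemma gen {A : Matrix (Fin n) (Fin n) ℕ} (hA : A ∈ UNNat n) :
    A ∈ Submonoid.closure {E | ∃ i j : Fin n, i < j ∧ E = Elem n i j} := by
  generalize hN : (∑ k : Fin n, ∑ l : Fin n, A k l) = N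
  induction N using Nat.strong_induction_on generalizing A with
  | _ N ih =>
  by_cases h1 : A = 1
  · subst h1; exact Submonoid.one_mem _
  -- there is a nonzero strict upper entry
  have hex : ∃ k : Fin n, ∃ l : Fin n, k < l ∧ A k l ≠ 0 := by
    by_contra hcon
    push_neg at hcon
    exact h1 (eq_of_upper hA one_mem' (fun k l hkl => by
      rw [hcon k l hkl, Matrix.one_apply, if_neg hkl.ne]))
  -- take the bottommost such row
  obtain ⟨i, j, hij, hAij, hmax⟩ :
      ∃ i j : Fin n, i < j ∧ A i j ≠ 0 ∧
        ∀ k : Fin n, i < k → ∀ l : Fin n, k < l → A k l = 0 := by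
    classical
    have hsne : (Finset.univ.filter (fun k : Fin n => ∃ l, k < l ∧ A k l ≠ 0)).Nonempty := by
      obtain ⟨k, l, hkl, hne⟩ := hex
      exact ⟨k, Finset.mem_filter.mpr ⟨Finset.mem_univ _, l, hkl, hne⟩⟩
    obtain ⟨j, hij, hAij⟩ :=
      (Finset.mem_filter.mp (Finset.max'_mem _ hsne)).2
    refine ⟨_, j, hij, hAij, ?_⟩
    intro k hk l hkl
    by_contra hne
    exact absurd (Finset.le_max' _ k
      (Finset.mem_filter.mpr ⟨Finset.mem_univ _, l, hkl, hne⟩)) (not_le_of_gt hk)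
  -- row j of A is the standard basis row
  have hrowj : ∀ l : Fin n, A j l = if l = j then 1 else 0 := by
    intro l
    rcases lt_trichotomy l j with h' | h' | h'
    · rw [hA.2 j l h', if_neg h'.ne]
    · subst h'; rw [hA.1, if_pos rfl]
    · rw [hmax j hij l h', if_neg h'.ne']
  -- the peeled matrix
  set A' : Matrix (Fin n) (Fin n) ℕ :=
    Matrix.of (fun k l => if k = i ∧ l = j then A i j - 1 else A k l) with hA'
  have hA'mem : A' ∈ UNNat n := by
    constructor
    · intro k
      have : ¬(k = i ∧ k = j) := by rintro ⟨h1', h2'⟩; exact hij.ne (h1' ▸ h2' ▸ rfl)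
      simp only [hA', Matrix.of_apply, if_neg this]
      exact hA.1 k
    · intro k l hlk
      have : ¬(k = i ∧ l = j) := by
        rintro ⟨h1', h2'⟩; subst h1'; subst h2'; exact absurd hij (not_lt_of_gt hlk)
      simp only [hA', Matrix.of_apply, if_neg this]
      exact hA.2 k l hlk
  have hfact : A = Elem n i j * A' := by
    ext k l
    rw [elem_mul_apply]
    by_cases hk : k = i
    · rw [if_pos hk]
      have hA'j : A' j l = A j l := by
        simp only [hA', Matrix.of_apply]
        rw [if_neg]
        rintro ⟨h1', -⟩
        exact hij.ne' h1'
      rw [hA'j, hrowj l]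
      by_cases hl : l = j
      · rw [if_pos hl]
        rw [hk, hl]
        simp only [hA', Matrix.of_apply]
        simp only [and_self, if_true]
        omega
      · rw [if_neg hl, add_zero]
        simp only [hA', Matrix.of_apply]
        rw [if_neg (fun h : k = i ∧ l = j => hl h.2)]
    · rw [if_neg hk, add_zero]
      simp only [hA', Matrix.of_apply]
      rw [if_neg (fun h : k = i ∧ l = j => hk h.1)]
  -- the sum decreases
  have hle : ∀ k l : Fin n, A' k l ≤ A k l := by
    intro k l
    simp only [hA', Matrix.of_apply]
    split
    · next h => rw [h.1, h.2]; omega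
    · exact le_refl _
  have hstrict : A' i j < A i j := by
    simp only [hA', Matrix.of_apply]
    simp only [and_self, if_true]
    omega
  have hlt : (∑ k : Fin n, ∑ l : Fin n, A' k l) < N := by
    rw [← hN]
    exact Finset.sum_lt_sum (fun k _ => Finset.sum_le_sum fun l _ => hle k l)
      ⟨i, Finset.mem_univ i,
        Finset.sum_lt_sum (fun l _ => hle i l) ⟨j, Finset.mem_univ j, hstrict⟩⟩
  rw [hfact]
  exact Submonoid.mul_mem _ (Submonoid.subset_closure ⟨i, j, hij, rfl⟩)
    (ih _ hlt hA'mem rfl)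

/-- For upper unipotent natural matrices, off-diagonal entries of a product dominate
the entrywise sum. -/
lemma key_ineq {X Y : Matrix (Fin n) (Fin n) ℕ} (hX : X ∈ UNNat n) (hY : Y ∈ UNNat n)
    {k l : Fin n} (h : k < l) : X k l + Y k l ≤ (X * Y) k l := by
  rw [Matrix.mul_apply]
  have hsub : ({k, l} : Finset (Fin n)) ⊆ Finset.univ := Finset.subset_univ _
  have heq : X k l + Y k l = ∑ m ∈ ({k, l} : Finset (Fin n)), X k m * Y m l := by
    rw [Finset.sum_pair h.ne, hX.1, hY.1, one_mul, mul_one, add_comm]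
  rw [heq]
  exact Finset.sum_le_sum_of_subset hsub

lemma indecomp {X Y : Matrix (Fin n) (Fin n) ℕ} (hX : X ∈ UNNat n) (hY : Y ∈ UNNat n)
    {i j : Fin n} (hij : i < j) (h : X * Y = Elem n i j) :
    X = 1 ∨ X = Elem n i j := by
  have hv : ∀ k l : Fin n, k < l → ¬(k = i ∧ l = j) → X k l = 0 ∧ Y k l = 0 := by
    intro k l hkl hne
    have hle := key_ineq hX hY hkl
    rw [h, elem_apply, if_neg hkl.ne, if_neg hne] at hle
    omega
  have hsum : X i j + Y i j = 1 := by
    have hmul : (X * Y) i j = X i j + Y i j := by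
      rw [Matrix.mul_apply]
      rw [← Finset.sum_subset (Finset.subset_univ ({i, j} : Finset (Fin n)))]
      · rw [Finset.sum_pair hij.ne, hX.1, hY.1, one_mul, mul_one, add_comm]
      · intro m _ hm
        simp only [Finset.mem_insert, Finset.mem_singleton, not_or] at hm
        obtain ⟨hmi, hmj⟩ := hm
        rcases lt_trichotomy m i with h' | h' | h'
        · rw [hX.2 i m h', zero_mul]
        · exact absurd h' hmi
        · rcases lt_trichotomy m j with h'' | h'' | h''
          · rw [(hv i m h' (fun hc => hmj hc.2)).1, zero_mul]
          · exact absurd h'' hmj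
          · rw [hY.2 m j h'', mul_zero]
    rw [h, elem_apply, if_neg hij.ne, if_pos (⟨rfl, rfl⟩ : i = i ∧ j = j)] at hmul
    omega
  rcases Nat.eq_zero_or_pos (X i j) with h0 | h0
  · left
    apply eq_of_upper hX one_mem'
    intro k l hkl
    rw [Matrix.one_apply, if_neg hkl.ne]
    by_cases hc : k = i ∧ l = j
    · rw [hc.1, hc.2]; exact h0
    · exact (hv k l hkl hc).1
  · right
    apply eq_of_upper hX (elem_mem hij)
    intro k l hkl
    rw [elem_apply, if_neg hkl.ne, zero_add]
    by_cases hc : k = i ∧ l = j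
    · rw [hc.1, hc.2, if_pos (⟨rfl, rfl⟩ : i = i ∧ j = j)]; omega
    · rw [if_neg hc]; exact (hv k l hkl hc).1

lemma prod_mem' : ∀ (l : List (Matrix (Fin n) (Fin n) ℕ)),
    (∀ x ∈ l, x ∈ UNNat n) → l.prod ∈ UNNat n := by
  intro l
  induction l with
  | nil => intro _; simpa using one_mem'
  | cons x t ih =>
    intro hmem
    rw [List.prod_cons]
    exact mul_mem' (hmem x (List.mem_cons_self (a := x) (l := t))) (ih fun y hy => hmem y (List.mem_cons_of_mem x hy))

lemma elem_ne_one {i j : Fin n} (hij : i < j) : Elem n i j ≠ (1 : Matrix (Fin n) (Fin n) ℕ) := by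
  intro h
  have h1 : Elem n i j i j = 1 := by
    rw [elem_apply, if_neg hij.ne, if_pos ⟨rfl, rfl⟩]
  rw [h, Matrix.one_apply, if_neg hij.ne] at h1
  exact one_ne_zero h1.symm

lemma minimality {B : Set (Matrix (Fin n) (Fin n) ℕ)}
    (hB : (Submonoid.closure B : Set (Matrix (Fin n) (Fin n) ℕ)) = UNNat n)
    {i j : Fin n} (hij : i < j) : Elem n i j ∈ B := by
  have hBsub : B ⊆ UNNat n := hB ▸ Submonoid.subset_closure
  have hE : Elem n i j ∈ Submonoid.closure B := by
    rw [← SetLike.mem_coe, hB]; exact elem_mem hij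
  obtain ⟨l, hl, hprod⟩ := Submonoid.exists_list_of_mem_closure hE
  clear hE
  induction l with
  | nil =>
    rw [List.prod_nil] at hprod
    exact absurd hprod.symm (elem_ne_one hij)
  | cons x t ih =>
    rw [List.prod_cons] at hprod
    have hx : x ∈ UNNat n := hBsub (hl x (List.mem_cons_self (a := x) (l := t)))
    have ht : t.prod ∈ UNNat n :=
      prod_mem' t (fun y hy => hBsub (hl y (List.mem_cons_of_mem x hy)))
    rcases indecomp hx ht hij hprod with h1 | h2
    · exact ih (fun y hy => hl y (List.mem_cons_of_mem x hy))
        (by rwa [h1, one_mul] at hprod)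
    · exact h2 ▸ hl x (List.mem_cons_self (a := x) (l := t))

end ElemAux

/-- `{E_{i,j} : i < j}` is the unique minimal generating set of `U(n,ℕ)`:
it generates `U(n,ℕ)`, and it is contained in every generating set. -/
theorem elem_unique_minimal_generating_set (n : ℕ) :
    (Submonoid.closure {E | ∃ i j : Fin n, i < j ∧ E = Elem n i j} :
        Set (Matrix (Fin n) (Fin n) ℕ)) = UNNat n ∧
    ∀ B : Set (Matrix (Fin n) (Fin n) ℕ),
      (Submonoid.closure B : Set (Matrix (Fin n) (Fin n) ℕ)) = UNNat n →
      {E | ∃ i j : Fin n, i < j ∧ E = Elem n i j} ⊆ B := by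
  constructor
  · apply subset_antisymm
    · have hle : Submonoid.closure {E | ∃ i j : Fin n, i < j ∧ E = Elem n i j} ≤
          ElemAux.UNM n := by
        apply Submonoid.closure_le.mpr
        rintro E ⟨i, j, hij, rfl⟩
        exact ElemAux.elem_mem hij
      exact fun x hx => hle hx
    · exact fun A hA => ElemAux.gen hA
  · rintro B hB E ⟨i, j, hij, rfl⟩
    exact ElemAux.minimality hB hij
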